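/- Let G₁ and G₂ be connected simple graphs, each on n vertices with m edges, with Laplacian spectra μ₁ ≥ μ₂ ≥ ⋯ ≥ μ_{n−1} > μ_n = 0 and λ₁ ≥ λ₂ ≥ ⋯ ≥ λ_{n−1} > λ_n = 0 respectively. If p is a positive integer such that 2m/(p+n) < min(μ_{n−1}, λ_{n−1}), then LE(G₁ ∪ K̄_p) = LE(G₂ ∪ K̄_p). -/

import Mathlib

open SimpleGraph Matrix Finset

/-- The number of edges of a simple graph. -/
noncomputable def edgeCount {V : Type*} (G : SimpleGraph V) : ℕ := G.edgeSet.ncard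

/-- The Laplacian spectrum of a finite simple graph, as a multiset of real numbers. -/
noncomputable def lapSpec {V : Type*} [Fintype V] (G : SimpleGraph V) : Multiset ℝ := by
  classical
  exact Finset.univ.val.map (G.posSemidef_lapMatrix ℝ).1.eigenvalues

/-- The signless Laplacian matrix `D + A` is Hermitian. -/
theorem signless_isHermitian {V : Type*} [Fintype V] [DecidableEq V] (G : SimpleGraph V)
    [DecidableRel G.Adj] : (G.degMatrix ℝ + G.adjMatrix ℝ).IsHermitian := by
  rw [Matrix.IsHermitian, conjTranspose_eq_transpose_of_trivial]
  exact Matrix.IsSymm.add (G.isSymm_degMatrix ℝ) (isSymm_adjMatrix G)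

/-- The signless Laplacian spectrum of a finite simple graph, as a multiset of reals. -/
noncomputable def signlessLapSpec {V : Type*} [Fintype V] (G : SimpleGraph V) : Multiset ℝ := by
  classical
  exact Finset.univ.val.map (signless_isHermitian G).eigenvalues

/-- The Laplacian energy `LE(G) = ∑ |μ_i - 2m/n|`. -/
noncomputable def lapEnergy {V : Type*} [Fintype V] (G : SimpleGraph V) : ℝ :=
  ((lapSpec G).map (fun x => |x - 2 * (edgeCount G : ℝ) / (Fintype.card V : ℝ)|)).sum

/-- The signless Laplacian energy `LE⁺(G) = ∑ |μ⁺_i - 2m/n|`. -/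
noncomputable def signlessLapEnergy {V : Type*} [Fintype V] (G : SimpleGraph V) : ℝ :=
  ((signlessLapSpec G).map (fun x => |x - 2 * (edgeCount G : ℝ) / (Fintype.card V : ℝ)|)).sum

/-- The join `G ∨ H` of two graphs: disjoint union plus all edges between them. -/
def SimpleGraph.join {V W : Type*} (G : SimpleGraph V) (H : SimpleGraph W) :
    SimpleGraph (V ⊕ W) where
  Adj a b :=
    match a, b with
    | Sum.inl u, Sum.inl v => G.Adj u v
    | Sum.inr u, Sum.inr v => H.Adj u v
    | Sum.inl _, Sum.inr _ => True
    | Sum.inr _, Sum.inl _ => True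
  symm := ⟨by rintro (u | u) (v | v) h <;> simp_all [adj_comm]⟩
  loopless := ⟨by rintro (u | u) h <;> simp_all⟩

/-- The tensor (Kronecker) product `G ⊗ H` of two graphs. -/
def SimpleGraph.tensorProd {V W : Type*} (G : SimpleGraph V) (H : SimpleGraph W) :
    SimpleGraph (V × W) where
  Adj a b := G.Adj a.1 b.1 ∧ H.Adj a.2 b.2
  symm := ⟨fun a b h => ⟨G.adj_symm h.1, H.adj_symm h.2⟩⟩
  loopless := ⟨fun a h => G.irrefl h.1⟩

open Polynomial

lemma charpoly_diag' {n : Type*} [Fintype n] [DecidableEq n] (d : n → ℝ) :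
    (Matrix.diagonal d).charpoly = ∏ i, (X - C (d i)) := by
  have h : (Matrix.diagonal d).charmatrix = Matrix.diagonal (fun i => X - C (d i)) := by
    ext i j
    by_cases hij : i = j
    · subst hij; simp [Matrix.charmatrix_apply_eq]
    · rw [Matrix.charmatrix_apply_ne _ _ _ hij, Matrix.diagonal_apply_ne _ hij]
      simp [Matrix.diagonal_apply_ne _ hij]
  rw [Matrix.charpoly, h, Matrix.det_diagonal]

lemma charpoly_conj' {n : Type*} [Fintype n] [DecidableEq n] (U A : Matrix n n ℝ)
    (hU : U * star U = 1) :
    (U * A * star U).charpoly = A.charpoly := by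
  set φ := (C : ℝ →+* ℝ[X]).mapMatrix (m := n)
  have hm : (U * A * star U).charmatrix = φ U * A.charmatrix * φ (star U) := by
    have hcomm : φ U * Matrix.scalar n (X : ℝ[X]) = Matrix.scalar n (X : ℝ[X]) * φ U :=
      (Matrix.scalar_commute (X : ℝ[X]) (fun r' => mul_comm _ _) (φ U)).symm
    rw [Matrix.charmatrix, Matrix.charmatrix]
    rw [mul_sub, sub_mul, hcomm, mul_assoc (Matrix.scalar n (X : ℝ[X])),
      ← _root_.map_mul φ, hU, _root_.map_one φ, mul_one,
      ← _root_.map_mul φ, ← _root_.map_mul φ, mul_assoc U A]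
  rw [Matrix.charpoly, Matrix.charpoly, hm, Matrix.det_mul, Matrix.det_mul]
  have : φ U ^ 0 = 1 := pow_zero _
  have hdet : det (φ U) * det (φ (star U)) = 1 := by
    rw [← Matrix.det_mul, ← _root_.map_mul φ, hU, _root_.map_one φ, Matrix.det_one]
  ring_nf
  calc det (φ U) * det A.charmatrix * det (φ (star U))
      = det A.charmatrix * (det (φ U) * det (φ (star U))) := by ring
    _ = det A.charmatrix := by rw [hdet, mul_one]

lemma spec_eq_roots' {n : Type*} [Fintype n] [DecidableEq n]
    {A : Matrix n n ℝ} (hA : A.IsHermitian) :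
    Finset.univ.val.map hA.eigenvalues = A.charpoly.roots := by
  have h := hA.spectral_theorem
  have hch : A.charpoly = (Matrix.diagonal hA.eigenvalues).charpoly := by
    conv_lhs => rw [h]
    rw [show Matrix.diagonal (RCLike.ofReal ∘ hA.eigenvalues) = Matrix.diagonal hA.eigenvalues by
      simp [RCLike.ofReal_real_eq_id]]
    exact charpoly_conj' _ _ ((Matrix.mem_unitaryGroup_iff).mp (hA.eigenvectorUnitary).2)
  rw [hch, charpoly_diag']
  have : ∏ i, (X - C (hA.eigenvalues i))
      = ((Finset.univ.val.map hA.eigenvalues).map (fun a => X - C a)).prod := by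
    rw [Multiset.map_map]; rfl
  rw [this, Polynomial.roots_multiset_prod_X_sub_C]

lemma spec_sum_eq_trace {n : Type*} [Fintype n] [DecidableEq n]
    {A : Matrix n n ℝ} (hA : A.IsHermitian) :
    (Finset.univ.val.map hA.eigenvalues).sum = A.trace := by
  have hU : (hA.eigenvectorUnitary : Matrix n n ℝ) * star (hA.eigenvectorUnitary : Matrix n n ℝ)
      = 1 := (Matrix.mem_unitaryGroup_iff).mp (hA.eigenvectorUnitary).2
  conv_rhs => rw [hA.spectral_theorem, Unitary.conjStarAlgAut_apply]
  rw [Matrix.trace_mul_cycle, mul_eq_one_comm.mp hU, one_mul]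
  rw [Matrix.trace_diagonal]
  simp only [Function.comp_apply, RCLike.ofReal_real_eq_id, id_eq]
  rfl

lemma lapSpec_eq {V : Type*} [Fintype V] [DecidableEq V] (G : SimpleGraph V)
    [DecidableRel G.Adj] :
    lapSpec G = Finset.univ.val.map (G.posSemidef_lapMatrix ℝ).1.eigenvalues := by
  rw [lapSpec]
  congr!

lemma lapSpec_eq_roots {V : Type*} [Fintype V] [DecidableEq V] (G : SimpleGraph V)
    [DecidableRel G.Adj] :
    lapSpec G = (G.lapMatrix ℝ).charpoly.roots := by
  rw [lapSpec_eq, spec_eq_roots']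

lemma lapSpec_sum {V : Type*} [Fintype V] (G : SimpleGraph V) :
    (lapSpec G).sum = 2 * (edgeCount G : ℝ) := by
  classical
  rw [lapSpec, spec_sum_eq_trace]
  have h1 : (G.lapMatrix ℝ).trace = ∑ v, (G.degree v : ℝ) := by
    simp [Matrix.trace, Matrix.diag, SimpleGraph.lapMatrix, SimpleGraph.degMatrix]
  have h2 : edgeCount G = G.edgeFinset.card := by
    rw [edgeCount, ← SimpleGraph.coe_edgeFinset, Set.ncard_coe_finset]
  rw [h1, ← Nat.cast_sum, SimpleGraph.sum_degrees_eq_twice_card_edges, h2]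
  push_cast
  ring

lemma lapMatrix_sum_bot {n p : ℕ} (G : SimpleGraph (Fin n)) [DecidableRel G.Adj]
    [DecidableRel (G ⊕g (⊥ : SimpleGraph (Fin p))).Adj] :
    (G ⊕g (⊥ : SimpleGraph (Fin p))).lapMatrix ℝ = Matrix.fromBlocks (G.lapMatrix ℝ) 0 0 0 := by
  classical
  have hdeg : ∀ v : Fin n, ((@SimpleGraph.degree _ (G ⊕g (⊥ : SimpleGraph (Fin p))) (Sum.inl v)
        (SimpleGraph.neighborSetFintype _ _) : ℝ))
      = (G.degree v : ℝ) := by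
    intro v
    rw [SimpleGraph.degree_eq_sum_if_adj, SimpleGraph.degree_eq_sum_if_adj]
    rw [Fintype.sum_sum_type]
    simp [SimpleGraph.sum_adj]
  have hdeg2 : ∀ v : Fin p, ((@SimpleGraph.degree _ (G ⊕g (⊥ : SimpleGraph (Fin p))) (Sum.inr v)
      (SimpleGraph.neighborSetFintype _ _) : ℝ)) = 0 := by
    intro v
    rw [SimpleGraph.degree_eq_sum_if_adj]
    rw [Fintype.sum_sum_type]
    simp [SimpleGraph.sum_adj]
  ext i j
  rcases i with i | i <;> rcases j with j | j <;>
    simp_all [SimpleGraph.lapMatrix, SimpleGraph.degMatrix, Matrix.diagonal, SimpleGraph.sum_adj,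
      Sum.inl.injEq, Matrix.fromBlocks]

lemma lapSpec_sum_bot {n p : ℕ} (G : SimpleGraph (Fin n)) :
    lapSpec (G ⊕g (⊥ : SimpleGraph (Fin p))) = lapSpec G + Multiset.replicate p 0 := by
  classical
  rw [lapSpec_eq_roots, lapSpec_eq_roots, lapMatrix_sum_bot, Matrix.charpoly_fromBlocks_zero₂₁]
  have h0 : (0 : Matrix (Fin p) (Fin p) ℝ).charpoly = X ^ p := by
    rw [← Matrix.diagonal_zero, charpoly_diag']
    simp
  rw [h0, Polynomial.roots_mul (mul_ne_zero (Matrix.charpoly_monic _).ne_zero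
    (pow_ne_zero _ Polynomial.X_ne_zero)), Polynomial.roots_pow, Polynomial.roots_X]
  congr 1
  rw [Multiset.nsmul_singleton]

lemma union_energy {n p m : ℕ} (hn : 2 ≤ n) (hp : 0 < p) (G : SimpleGraph (Fin n)) (μ : Fin n → ℝ)
    (hmono : Antitone μ) (hspec : lapSpec G = Finset.univ.val.map μ)
    (hlast : μ ⟨n - 1, by omega⟩ = 0)
    (hm : edgeCount G = m)
    (hgt : 2 * (m : ℝ) / ((p : ℝ) + (n : ℝ)) < μ ⟨n - 2, by omega⟩) :
    lapEnergy (G ⊕g (⊥ : SimpleGraph (Fin p))) =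
      2 * (m : ℝ) - ((n : ℝ) - 1) * (2 * (m : ℝ) / ((n : ℝ) + (p : ℝ)))
        + (2 * (m : ℝ) / ((n : ℝ) + (p : ℝ))) + (p : ℝ) * (2 * (m : ℝ) / ((n : ℝ) + (p : ℝ))) := by
  classical
  set c : ℝ := 2 * (m : ℝ) / ((n : ℝ) + (p : ℝ)) with hc
  have hnp : (0 : ℝ) < (n : ℝ) + (p : ℝ) := by positivity
  have hc0 : 0 ≤ c := by positivity
  have hgt' : c < μ ⟨n - 2, by omega⟩ := by rwa [add_comm (p : ℝ) (n : ℝ)] at hgt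
  have hμsum : ∑ i, μ i = 2 * (m : ℝ) := by
    have h := lapSpec_sum G
    rw [hspec, hm] at h
    exact h
  have hEC : edgeCount (G ⊕g (⊥ : SimpleGraph (Fin p))) = m := by
    have h1 := lapSpec_sum (G ⊕g (⊥ : SimpleGraph (Fin p)))
    rw [lapSpec_sum_bot, Multiset.sum_add, Multiset.sum_replicate, lapSpec_sum, hm] at h1
    simp only [smul_zero, add_zero] at h1
    have : (m : ℝ) = (edgeCount (G ⊕g (⊥ : SimpleGraph (Fin p))) : ℝ) := by linarith
    exact_mod_cast this.symm
  have hcard : ((Fintype.card (Fin n ⊕ Fin p) : ℕ) : ℝ) = (n : ℝ) + (p : ℝ) := by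
    simp [Fintype.card_sum]
  simp only [lapEnergy, hEC]
  rw [lapSpec_sum_bot, Multiset.map_add, Multiset.sum_add, Multiset.map_replicate,
    Multiset.sum_replicate, hspec, Multiset.map_map, hcard]
  have habs0 : |(0 : ℝ) - c| = c := by rw [zero_sub, abs_neg, abs_of_nonneg hc0]
  have hmap : (Multiset.map ((fun x => |x - c|) ∘ μ) Finset.univ.val).sum
      = ∑ i, |μ i - c| := rfl
  rw [hmap, habs0]
  set last : Fin n := ⟨n - 1, by omega⟩ with hlastdef
  have hsplit : ∑ i ∈ Finset.univ.erase last, |μ i - c| + |μ last - c| = ∑ i, |μ i - c| :=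
    Finset.sum_erase_add _ _ (Finset.mem_univ last)
  have herase : ∀ i ∈ Finset.univ.erase last, |μ i - c| = μ i - c := by
    intro i hi
    have hine : i ≠ last := (Finset.mem_erase.mp hi).1
    have hile : i ≤ (⟨n - 2, by omega⟩ : Fin n) := by
      rw [Fin.le_def]
      have : (i : ℕ) ≠ n - 1 := fun h => hine (Fin.ext h)
      have := i.isLt
      simp only []
      omega
    have hge := hmono hile
    rw [abs_of_nonneg (by linarith : (0 : ℝ) ≤ μ i - c)]
  have herasesum : ∑ i ∈ Finset.univ.erase last, μ i = 2 * (m : ℝ) := by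
    have h := Finset.sum_erase_add Finset.univ μ (Finset.mem_univ last)
    rw [hμsum, hlastdef] at h
    rw [hlast] at h
    linarith
  have hcarderase : (Finset.univ.erase last).card = n - 1 := by
    rw [Finset.card_erase_of_mem (Finset.mem_univ last), Finset.card_univ, Fintype.card_fin]
  rw [← hsplit, Finset.sum_congr rfl herase, Finset.sum_sub_distrib, Finset.sum_const,
    hcarderase, herasesum]
  rw [hlastdef, hlast, habs0]
  have hcast : ((n - 1 : ℕ) : ℝ) = (n : ℝ) - 1 := by
    have : 1 ≤ n := by omega
    push_cast [this]
    ring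
  rw [nsmul_eq_mul, nsmul_eq_mul, hcast]

theorem stmt0 (n m p : ℕ) (hn : 2 ≤ n) (hp : 0 < p)
    (G₁ G₂ : SimpleGraph (Fin n))
    (hc₁ : G₁.Connected) (hc₂ : G₂.Connected)
    (hm₁ : edgeCount G₁ = m) (hm₂ : edgeCount G₂ = m)
    (μ ν : Fin n → ℝ) (hμmono : Antitone μ) (hνmono : Antitone ν)
    (hμspec : lapSpec G₁ = Finset.univ.val.map μ)
    (hνspec : lapSpec G₂ = Finset.univ.val.map ν)
    (hμlast : μ ⟨n - 1, by omega⟩ = 0) (hνlast : ν ⟨n - 1, by omega⟩ = 0)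
    (hμpos : 0 < μ ⟨n - 2, by omega⟩) (hνpos : 0 < ν ⟨n - 2, by omega⟩)
    (hcond : 2 * (m : ℝ) / ((p : ℝ) + (n : ℝ)) < min (μ ⟨n - 2, by omega⟩) (ν ⟨n - 2, by omega⟩)) :
    lapEnergy (G₁ ⊕g (⊥ : SimpleGraph (Fin p))) = lapEnergy (G₂ ⊕g (⊥ : SimpleGraph (Fin p))) := by
  rw [union_energy hn hp G₁ μ hμmono hμspec hμlast hm₁
      (lt_of_lt_of_le hcond (min_le_left _ _)),
    union_energy hn hp G₂ ν hνmono hνspec hνlast hm₂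
      (lt_of_lt_of_le hcond (min_le_right _ _))]
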